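/- Suppose w_e|_{K_{i(e)}} is uniformly continuous for every e ∈ E. Then the pushforward F(M) of M under the coding map F is an invariant measure, i.e. F(M) ∈ P(M), for every equilibrium state M ∈ E(M). -/

import Mathlib

open MeasureTheory Filter Topology
open scoped ENNReal NNReal Classical

noncomputable section

/-- A countable Markov system `(K_{i(e)}, w_e, p_e)_{e ∈ E}` on a metric space `K`:
a partition `(K_j)_{j ∈ N}` of `K` into nonempty Borel sets, source and target maps
`i, t : E → N` (`i` surjective), and for each `e ∈ E` Borel maps `w_e` and probability
functions `p_e` (extended by zero outside `K_{i(e)}`) with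
`∑_{e, i(e)=j} p_e(y) = 1` for `y ∈ K_j`. -/
structure MarkovSystem (K : Type*) [MetricSpace K] [MeasurableSpace K]
    (N : Type*) (E : Type*) where
  Kset : N → Set K
  Kset_nonempty : ∀ j, (Kset j).Nonempty
  Kset_measurable : ∀ j, MeasurableSet (Kset j)
  Kset_disjoint : Pairwise (Function.onFun Disjoint Kset)
  Kset_cover : (⋃ j, Kset j) = Set.univ
  i : E → N
  t : E → N
  i_surj : Function.Surjective i
  w : E → K → K
  p : E → K → ℝ
  w_measurable : ∀ e, Measurable (w e)
  p_measurable : ∀ e, Measurable (p e)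
  p_nonneg : ∀ e x, 0 ≤ p e x
  p_le_one : ∀ e x, p e x ≤ 1
  p_zero_outside : ∀ e x, x ∉ Kset (i e) → p e x = 0
  w_mapsTo : ∀ e, Set.MapsTo (w e) (Kset (i e)) (Kset (t e))
  p_pos_somewhere : ∀ e, ∃ x ∈ Kset (i e), 0 < p e x
  p_tsum_one : ∀ j, ∀ x ∈ Kset j, (∑' e : {e : E // i e = j}, p e.val x) = 1

/-- `Ē = E ∪ {∞}` (one-point compactification); with `E` countable its Borel σ-algebra
consists of all subsets. -/
instance optionMeasurableSpace (E : Type*) : MeasurableSpace (Option E) := ⊤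

/-- The code space `Σ̄ = Ē^ℤ`, carrying the product σ-algebra. -/
abbrev CodeSpace (E : Type*) : Type _ := ℤ → Option E

/-- The left shift `S` on the code space, `(Sσ)_{k-1} = σ_k`. -/
def shiftMap (E : Type*) : CodeSpace E → CodeSpace E := fun σ k => σ (k + 1)

/-- The cylinder set `_m[es₀, …, es_{n}] = {σ : σ_{m+k} = es_k}`. -/
def cylSetL {E : Type*} (m : ℤ) (es : List (Option E)) : Set (CodeSpace E) :=
  {σ | ∀ (k : ℕ) (h : k < es.length), σ (m + (k : ℤ)) = es.get ⟨k, h⟩}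

/-- The σ-algebra `𝓕` generated by the cylinder sets `_m[e_m, …, e_0]`, `m ≤ 0`. -/
def pastAlgebra (E : Type*) : MeasurableSpace (CodeSpace E) :=
  MeasurableSpace.generateFrom
    {A | ∃ es : List (Option E), es ≠ [] ∧ A = cylSetL (1 - (es.length : ℤ)) es}

/-- The conditional entropy `h_S(Λ) = H_Λ((_1[e])_{e ∈ Ē} | 𝓕)`. -/
def entropyS {E : Type*} (Λ : Measure (CodeSpace E)) : ℝ≥0∞ :=
  ∑' eo : Option E,
    ∫⁻ σ, ENNReal.ofReal
        (Real.negMulLog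
          ((Λ[Set.indicator {τ : CodeSpace E | τ 1 = eo} (fun _ => (1 : ℝ)) | pastAlgebra E]) σ)) ∂Λ

namespace MarkovSystem

variable {K : Type*} [MetricSpace K] [MeasurableSpace K] {N E : Type*}

/-- The Markov operator `Uf = ∑_e p_e · (f ∘ w_e)` acting on nonnegative Borel functions. -/
def markovOp (M : MarkovSystem K N E) (f : K → ℝ≥0∞) : K → ℝ≥0∞ :=
  fun x => ∑' e : E, ENNReal.ofReal (M.p e x) * f (M.w e x)

/-- The adjoint operator `U*` acting on measures, `(U*ν)(B) = ∫ U(1_B) dν`. -/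
def adjOp (M : MarkovSystem K N E) (ν : Measure K) : Measure K :=
  Measure.sum fun e : E =>
    Measure.map (M.w e) (ν.withDensity fun x => ENNReal.ofReal (M.p e x))

/-- `μ ∈ P(M)`: `μ` is an invariant Borel probability measure, `U*μ = μ`. -/
def IsInvariantMeasure (M : MarkovSystem K N E) (μ : Measure K) : Prop :=
  IsProbabilityMeasure μ ∧ M.adjOp μ = μ

/-- The path space `Σ_G`: all coordinates lie in `E` and `i(σ_{n+1}) = t(σ_n)`. -/
def pathSpace (M : MarkovSystem K N E) : Set (CodeSpace E) :=
  {σ | ∀ n : ℤ, ∃ e e' : E, σ n = some e ∧ σ (n + 1) = some e' ∧ M.i e' = M.t e}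

/-- `T_j = {σ ∈ Σ_G : t(σ_0) = j}`. -/
def Tset (M : MarkovSystem K N E) (j : N) : Set (CodeSpace E) :=
  {σ | σ ∈ M.pathSpace ∧ ∃ e : E, σ 0 = some e ∧ M.t e = j}

/-- `w` extended to `Ē`, with `w_∞ = id`. -/
def wext (M : MarkovSystem K N E) : Option E → K → K := fun o => o.elim id M.w

/-- `p` extended to `Ē`, with `p_∞ = 0`. -/
def pext (M : MarkovSystem K N E) : Option E → K → ℝ := fun o => o.elim (fun _ => 0) M.p

/-- `i` extended to `Ē`, with `i(∞) = j₀`. -/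
def iext (M : MarkovSystem K N E) (j0 : N) : Option E → N := fun o => o.elim j0 M.i

/-- `t` extended to `Ē`, with `t(∞) = j₀`. -/
def text (M : MarkovSystem K N E) (j0 : N) : Option E → N := fun o => o.elim j0 M.t

/-- `iterW M σ n y = w_{σ_0} ∘ w_{σ_{-1}} ∘ ⋯ ∘ w_{σ_{-n}} (y)`. -/
def iterW (M : MarkovSystem K N E) (σ : CodeSpace E) : ℕ → K → K
  | 0, y => M.wext (σ 0) y
  | n + 1, y => M.iterW σ n (M.wext (σ (-(n + 1 : ℤ))) y)

/-- `orbit M j0 xp σ n = w_{σ_0} ∘ ⋯ ∘ w_{σ_{-n}} (x_{i(σ_{-n})})`. -/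
def orbit (M : MarkovSystem K N E) (j0 : N) (xp : N → K) (σ : CodeSpace E) (n : ℕ) : K :=
  M.iterW σ n (xp (M.iext j0 (σ (-(n : ℤ)))))

/-- `D`: the set of `σ ∈ Σ_G` for which `lim_{m → -∞} w_{σ_0} ∘ ⋯ ∘ w_{σ_m}(x_{i(σ_m)})` exists. -/
def codeDomain (M : MarkovSystem K N E) (j0 : N) (xp : N → K) : Set (CodeSpace E) :=
  {σ | σ ∈ M.pathSpace ∧ ∃ l : K, Tendsto (fun n : ℕ => M.orbit j0 xp σ n) atTop (𝓝 l)}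

/-- The coding map `F`: the above limit on `D`, and `x_{t(σ_0)}` elsewhere. -/
def code (M : MarkovSystem K N E) (j0 : N) (xp : N → K) (σ : CodeSpace E) : K :=
  if h : σ ∈ M.codeDomain j0 xp then h.2.choose else xp (M.text j0 (σ 0))

/-- `Λ ∈ E(M)`: `Λ` is a shift-invariant Borel probability measure with `Λ(D) = 1` and
`E_Λ(1_{_1[e]} | 𝓕) = p_e ∘ F` `Λ`-a.e. for every `e ∈ E` (an equilibrium state). -/
def IsEquilibrium (M : MarkovSystem K N E) (j0 : N) (xp : N → K)
    (Λ : Measure (CodeSpace E)) : Prop :=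
  IsProbabilityMeasure Λ ∧ Measure.map (shiftMap E) Λ = Λ ∧
    Λ (M.codeDomain j0 xp) = 1 ∧
    ∀ e : E,
      (Λ[Set.indicator {σ : CodeSpace E | σ 1 = some e} (fun _ => (1 : ℝ)) | pastAlgebra E])
        =ᵐ[Λ] fun σ => M.p e (M.code j0 xp σ)

/-- `pbar` is the family of continuous extensions `p̄_e` of `p_e|_{K_{i(e)}}` to the closure
of `K_{i(e)}`, extended further by zero on `K`. -/
def IsUCExtensionP (M : MarkovSystem K N E) (pbar : E → K → ℝ) : Prop :=
  ∀ e : E, ContinuousOn (pbar e) (closure (M.Kset (M.i e))) ∧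
    (∀ x ∈ M.Kset (M.i e), pbar e x = M.p e x) ∧
    (∀ x, x ∉ closure (M.Kset (M.i e)) → pbar e x = 0)

/-- `wb` is a family of continuous extensions `w̄_e` of `w_e|_{K_{i(e)}}` to the closure
of `K_{i(e)}`. -/
def IsUCExtensionW (M : MarkovSystem K N E) (wb : E → K → K) : Prop :=
  ∀ e : E, ContinuousOn (wb e) (closure (M.Kset (M.i e))) ∧
    (∀ x ∈ M.Kset (M.i e), wb e x = M.w e x)

/-- The Markov system is uniformly continuous: each `w_e|_{K_{i(e)}}` and `p_e|_{K_{i(e)}}`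
is uniformly continuous. -/
def IsUniformlyContinuous (M : MarkovSystem K N E) : Prop :=
  ∀ e : E, UniformContinuousOn (M.w e) (M.Kset (M.i e)) ∧
    UniformContinuousOn (M.p e) (M.Kset (M.i e))

/-- `∂p_e = p̄_e · 1_{cl(K_{i(e)}) \ K_{i(e)}}`. -/
def dp (M : MarkovSystem K N E) (pbar : E → K → ℝ) (e : E) : K → ℝ :=
  Set.indicator (closure (M.Kset (M.i e)) \ M.Kset (M.i e)) (pbar e)

/-- `Λ ∈ Ẽ(M)` (asymptotic state): shift-invariant probability with `Λ(D) = 1` and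
`E_Λ(1_{_1[e]} | 𝓕) = (p̄_e ∘ F)·1_{T_{i(e)}}` `Λ`-a.e. for every `e`. -/
def IsAsymptotic (M : MarkovSystem K N E) (j0 : N) (xp : N → K) (pbar : E → K → ℝ)
    (Λ : Measure (CodeSpace E)) : Prop :=
  IsProbabilityMeasure Λ ∧ Measure.map (shiftMap E) Λ = Λ ∧
    Λ (M.codeDomain j0 xp) = 1 ∧
    ∀ e : E,
      (Λ[Set.indicator {σ : CodeSpace E | σ 1 = some e} (fun _ => (1 : ℝ)) | pastAlgebra E])
        =ᵐ[Λ] Set.indicator (M.Tset (M.i e)) (fun σ => pbar e (M.code j0 xp σ))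

/-- `Λ ∈ E_⊥(M)`: shift-invariant probability with `Λ(D) = 1` and
`E_Λ(1_{_1[e]} | 𝓕) = (∂p_e ∘ F)·1_{T_{i(e)}}` `Λ`-a.e. for every `e`. -/
def IsPerp (M : MarkovSystem K N E) (j0 : N) (xp : N → K) (pbar : E → K → ℝ)
    (Λ : Measure (CodeSpace E)) : Prop :=
  IsProbabilityMeasure Λ ∧ Measure.map (shiftMap E) Λ = Λ ∧
    Λ (M.codeDomain j0 xp) = 1 ∧
    ∀ e : E,
      (Λ[Set.indicator {σ : CodeSpace E | σ 1 = some e} (fun _ => (1 : ℝ)) | pastAlgebra E])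
        =ᵐ[Λ] Set.indicator (M.Tset (M.i e)) (fun σ => M.dp pbar e (M.code j0 xp σ))

/-- `G = ⋃_{k ≥ 0} ⋃_{j ∈ N} S^{-k}(F^{-1}(K_j) ∩ T_j)`. -/
def Gset (M : MarkovSystem K N E) (j0 : N) (xp : N → K) : Set (CodeSpace E) :=
  ⋃ (k : ℕ) (j : N), (shiftMap E)^[k] ⁻¹' ((M.code j0 xp) ⁻¹' (M.Kset j) ∩ M.Tset j)

/-- `M` is non-degenerate: for every asymptotic state `Λ` there is `i ∈ N` with
`Λ(T_i ∩ F^{-1}(K_i)) > 0`. -/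
def IsNonDegenerate (M : MarkovSystem K N E) (j0 : N) (xp : N → K) (pbar : E → K → ℝ) : Prop :=
  ∀ Λ : Measure (CodeSpace E), M.IsAsymptotic j0 xp pbar Λ →
    ∃ i : N, 0 < Λ (M.Tset i ∩ (M.code j0 xp) ⁻¹' (M.Kset i))

/-- `M` is consistent: `F(Λ) ∈ P(M)` for every asymptotic state `Λ`. -/
def IsConsistent (M : MarkovSystem K N E) (j0 : N) (xp : N → K) (pbar : E → K → ℝ) : Prop :=
  ∀ Λ : Measure (CodeSpace E), M.IsAsymptotic j0 xp pbar Λ →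
    M.IsInvariantMeasure (Measure.map (M.code j0 xp) Λ)

/-- `Rf = ∑_e ∂p_e · (f ∘ w̄_e)`. -/
def Rop (M : MarkovSystem K N E) (pbar : E → K → ℝ) (wb : E → K → K)
    (f : K → ℝ≥0∞) : K → ℝ≥0∞ :=
  fun x => ∑' e : E, ENNReal.ofReal (M.dp pbar e x) * f (wb e x)

/-- `Ω = ⋂_{n ≥ 1} {R^n 1 ≥ 1}`. -/
def OmegaSet (M : MarkovSystem K N E) (pbar : E → K → ℝ) (wb : E → K → K) : Set K :=
  ⋂ n : ℕ, {x : K | 1 ≤ (M.Rop pbar wb)^[n + 1] (fun _ => 1) x}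

/-- `ξ_j = ∑_{e, i(e) = j} sup_{x ∈ K_j} p_e(x)`. -/
def xi (M : MarkovSystem K N E) (j : N) : ℝ≥0∞ :=
  ∑' e : {e : E // M.i e = j}, ⨆ x ∈ M.Kset j, ENNReal.ofReal (M.p e.val x)

/-- `M` has a dominating Markov chain: `ξ_j < ∞` for all `j ∈ N`. -/
def HasDominatingChain (M : MarkovSystem K N E) : Prop := ∀ j : N, M.xi j ≠ ⊤

/-- `ξ_j · q_{j j'} = ∑_{e, i(e) = j, t(e) = j'} sup_{x ∈ K_j} p_e(x)`. -/
def xiq (M : MarkovSystem K N E) (j j' : N) : ℝ≥0∞ :=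
  ∑' e : {e : E // M.i e = j ∧ M.t e = j'}, ⨆ x ∈ M.Kset j, ENNReal.ofReal (M.p e.val x)

/-- `c = ∑_{j'} sup_j ξ_j q_{j j'}`. -/
def cConst (M : MarkovSystem K N E) : ℝ≥0∞ := ∑' j' : N, ⨆ j : N, M.xiq j j'

/-- `α^{x_0}_n({j}) = (1/n) ∑_{k=1}^n ((U*)^k δ_{x_0})(K_j)`. -/
def alphaMeas (M : MarkovSystem K N E) (x0 : K) (n : ℕ) (j : N) : ℝ≥0∞ :=
  (n : ℝ≥0∞)⁻¹ * ∑ k ∈ Finset.range n, (M.adjOp^[k + 1] (Measure.dirac x0)) (M.Kset j)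

/-- Condition (T) at `x_0`: the sequence `(α^{x_0}_n)_n` is uniformly tight. -/
def ConditionT (M : MarkovSystem K N E) (x0 : K) : Prop :=
  ∀ ε : ℝ, 0 < ε → ∃ V : Finset N,
    ∀ n : ℕ, (∑' j : {j : N // j ∉ V}, M.alphaMeas x0 (n + 1) j.val) < ENNReal.ofReal ε

/-- `M` is contractive with contraction rate `a`:
`∑_{e, i(e) = j} p_e(x) d(w_e x, w_e y) ≤ a·d(x, y)` on each `K_j`. -/
def IsContractive (M : MarkovSystem K N E) (a : ℝ) : Prop :=
  ∀ j : N, ∀ x ∈ M.Kset j, ∀ y ∈ M.Kset j,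
    (∑' e : {e : E // M.i e = j},
        ENNReal.ofReal (M.p e.val x * dist (M.w e.val x) (M.w e.val y)))
      ≤ ENNReal.ofReal (a * dist x y)

/-- `L(x) = ∑_j d(x, x_j)·1_{K_j}(x)`. -/
def Lfun (M : MarkovSystem K N E) (xp : N → K) : K → ℝ≥0∞ :=
  fun x => ∑' j : N, Set.indicator (M.Kset j) (fun y => ENNReal.ofReal (dist y (xp j))) x

/-- `b = sup_j sup_{x ∈ K_j} ∑_{e, i(e) = j} p_e(x)·d(w_e(x_{i(e)}), x_{t(e)})`. -/
def bConst (M : MarkovSystem K N E) (xp : N → K) : ℝ≥0∞ :=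
  ⨆ j : N, ⨆ x ∈ M.Kset j,
    ∑' e : {e : E // M.i e = j},
      ENNReal.ofReal (M.p e.val x * dist (M.w e.val (xp (M.i e.val))) (xp (M.t e.val)))

/-- `P^m_x` evaluated on a word: `p_{e_0}(x)·p_{e_1}(w_{e_0}x)·⋯`. -/
def wordProb (M : MarkovSystem K N E) : List (Option E) → K → ℝ
  | [], _ => 1
  | o :: rest, x => M.pext o x * M.wordProb rest (M.wext o x)

/-- `Λ = Φ(μ)`: `Λ` is a shift-invariant Borel probability measure with
`Λ(_m[e_m, …, e_n]) = ∫ P^m_x(_m[e_m, …, e_n]) dμ(x)` for all cylinders with `m ≤ 0`. -/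
def IsPhiOf (M : MarkovSystem K N E) (μ : Measure K) (Λ : Measure (CodeSpace E)) : Prop :=
  IsProbabilityMeasure Λ ∧ Measure.map (shiftMap E) Λ = Λ ∧
    ∀ m : ℤ, m ≤ 0 → ∀ es : List (Option E),
      Λ (cylSetL m es) = ∫⁻ x, ENNReal.ofReal (M.wordProb es x) ∂μ

/-- The (negative of the) energy function: `-u(σ) = -log p_{σ_1}(F(σ))` on `D`
(`+∞` if `p_{σ_1}(F(σ)) = 0`) and `+∞` off `D`, valued in `[0, ∞]`. -/
def negEnergy (M : MarkovSystem K N E) (j0 : N) (xp : N → K) (σ : CodeSpace E) : ℝ≥0∞ :=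
  if σ ∈ M.codeDomain j0 xp then
    (σ 1).elim ⊤ fun e =>
      if M.p e (M.code j0 xp σ) = 0 then ⊤
      else ENNReal.ofReal (-Real.log (M.p e (M.code j0 xp σ)))
  else ⊤

/-- The free energy `h_S(Λ) + ∫ u dΛ`, as an extended real number. -/
def freeEnergy (M : MarkovSystem K N E) (j0 : N) (xp : N → K)
    (Λ : Measure (CodeSpace E)) : EReal :=
  (entropyS Λ : EReal) - ((∫⁻ σ, M.negEnergy j0 xp σ ∂Λ : ℝ≥0∞) : EReal)

/-- `Λ₀ ∈ E(u)`: `Λ₀` is a thermodynamic equilibrium state for the energy function `u`. -/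
def IsEquilibriumForU (M : MarkovSystem K N E) (j0 : N) (xp : N → K)
    (Λ0 : Measure (CodeSpace E)) : Prop :=
  IsProbabilityMeasure Λ0 ∧ Measure.map (shiftMap E) Λ0 = Λ0 ∧ entropyS Λ0 ≠ ⊤ ∧
    M.freeEnergy j0 xp Λ0 =
      sSup {r : EReal | ∃ Λ : Measure (CodeSpace E),
        IsProbabilityMeasure Λ ∧ Measure.map (shiftMap E) Λ = Λ ∧ entropyS Λ ≠ ⊤ ∧
          r = M.freeEnergy j0 xp Λ}

end MarkovSystem

end


variable {K : Type*} [MetricSpace K] [CompleteSpace K] [MeasurableSpace K] [BorelSpace K]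
  {N E : Type*} [Countable N] [Countable E]

set_option linter.unusedSectionVars false

section Infra

instance optionMSC (E : Type*) : MeasurableSingletonClass (Option E) := ⟨fun _ => trivial⟩

variable {E : Type*} [Countable E]

lemma cylSetL_eq_iInter (m : ℤ) (es : List (Option E)) :
    cylSetL m es = ⋂ k : Fin es.length, (fun σ : CodeSpace E => σ (m + (k : ℕ))) ⁻¹' {es.get k} := by
  ext σ
  simp only [cylSetL, Set.mem_setOf_eq, Set.mem_iInter, Set.mem_preimage, Set.mem_singleton_iff]
  exact ⟨fun h k => h k k.2, fun h k hk => h ⟨k, hk⟩⟩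

lemma measurableSet_cylSetL (m : ℤ) (es : List (Option E)) :
    MeasurableSet (cylSetL m es) := by
  rw [cylSetL_eq_iInter]
  exact MeasurableSet.iInter fun k =>
    (measurable_pi_apply (m + (k : ℕ))) (measurableSet_singleton (es.get k))

lemma pastAlgebra_le : pastAlgebra E ≤ (inferInstance : MeasurableSpace (CodeSpace E)) := by
  refine MeasurableSpace.generateFrom_le ?_
  rintro A ⟨es, -, rfl⟩
  exact measurableSet_cylSetL _ _

lemma measurableSet_past_coord {k : ℤ} (hk : k ≤ 0) (eo : Option E) :
    MeasurableSet[pastAlgebra E] {σ : CodeSpace E | σ k = eo} := by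
  set n : ℕ := (-k).toNat with hn
  have hkn : k = -(n : ℤ) := by omega
  have hset : {σ : CodeSpace E | σ k = eo} =
      ⋃ v : Fin n → Option E, cylSetL k (eo :: List.ofFn v) := by
    ext σ
    simp only [Set.mem_setOf_eq, Set.mem_iUnion]
    constructor
    · intro h
      refine ⟨fun j => σ (k + 1 + ((j : ℕ) : ℤ)), ?_⟩
      intro l hl
      match l with
      | 0 => simpa using h
      | (l' + 1) =>
        have hlen : l' < n := by
          simp only [List.length_cons, List.length_ofFn] at hl; omega
        have hget : (eo :: List.ofFn (fun j : Fin n => σ (k + 1 + ((j : ℕ) : ℤ)))).get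
            ⟨l' + 1, hl⟩ = σ (k + 1 + (l' : ℤ)) := by
          simp [List.get_ofFn]
        rw [hget]
        show σ (k + ((l' + 1 : ℕ) : ℤ)) = σ (k + 1 + (l' : ℤ))
        congr 1
        push_cast
        ring
    · rintro ⟨v, hv⟩
      have := hv 0 (by simp)
      simpa using this
  rw [hset]
  refine MeasurableSet.iUnion fun v => MeasurableSpace.measurableSet_generateFrom ?_
  refine ⟨eo :: List.ofFn v, by simp, ?_⟩
  have hlen : (1 : ℤ) - ((eo :: List.ofFn v).length : ℤ) = k := by
    simp only [List.length_cons, List.length_ofFn]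
    omega
  rw [hlen]

lemma measurable_past_coord {k : ℤ} (hk : k ≤ 0) :
    Measurable[pastAlgebra E] (fun σ : CodeSpace E => σ k) := by
  letI : MeasurableSpace (CodeSpace E) := pastAlgebra E
  exact measurable_to_countable' fun eo => measurableSet_past_coord hk eo

/-- Any function depending only on coordinates in `[-n, 0]` is `pastAlgebra`-measurable. -/
lemma measurable_past_of_depends {X : Type*} [MeasurableSpace X] (n : ℕ)
    (h : CodeSpace E → X)
    (hdep : ∀ σ τ : CodeSpace E, (∀ k : ℤ, -(n : ℤ) ≤ k → k ≤ 0 → σ k = τ k) → h σ = h τ) :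
    Measurable[pastAlgebra E] h := by
  classical
  set ext : (Fin (n + 1) → Option E) → CodeSpace E := fun v k =>
    if hk : -(n : ℤ) ≤ k ∧ k ≤ 0 then v ⟨(-k).toNat, by omega⟩ else none with hext
  have hfac : h = (fun v => h (ext v)) ∘ (fun (σ : CodeSpace E) (j : Fin (n + 1)) =>
      σ (-((j : ℕ) : ℤ))) := by
    funext σ
    refine (hdep _ _ ?_).symm
    intro k hk1 hk2
    simp only [ext, Function.comp]
    rw [dif_pos ⟨hk1, hk2⟩]
    congr 1
    omega
  rw [hfac]
  letI : MeasurableSpace (CodeSpace E) := pastAlgebra E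
  exact (measurable_of_countable _).comp
    (measurable_pi_lambda _ fun j => measurable_past_coord (by omega))

end Infra
section Orbit

variable {K : Type*} [MetricSpace K] [MeasurableSpace K]
  {N E : Type*} [Countable E]

namespace MarkovSystem

lemma iterW_congr (M : MarkovSystem K N E) (σ τ : CodeSpace E) :
    ∀ (n : ℕ) (y : K), (∀ k : ℤ, -(n : ℤ) ≤ k → k ≤ 0 → σ k = τ k) →
      M.iterW σ n y = M.iterW τ n y := by
  intro n
  induction n with
  | zero =>
    intro y h
    simp only [iterW]
    rw [h 0 (by omega) (by omega)]
  | succ n ih =>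
    intro y h
    simp only [iterW]
    rw [h (-(n + 1 : ℤ)) (by push_cast; omega) (by omega)]
    exact ih _ fun k h1 h2 => h k (by push_cast at h1 ⊢; omega) h2

lemma orbit_congr (M : MarkovSystem K N E) (j0 : N) (xp : N → K) (σ τ : CodeSpace E) (n : ℕ)
    (h : ∀ k : ℤ, -(n : ℤ) ≤ k → k ≤ 0 → σ k = τ k) :
    M.orbit j0 xp σ n = M.orbit j0 xp τ n := by
  unfold orbit
  rw [h (-(n : ℤ)) (by omega) (by omega)]
  exact M.iterW_congr σ τ n _ h

lemma measurable_past_orbit [BorelSpace K] (M : MarkovSystem K N E) (j0 : N) (xp : N → K)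
    (n : ℕ) : Measurable[pastAlgebra E] (fun σ => M.orbit j0 xp σ n) :=
  measurable_past_of_depends n _ fun σ τ h => M.orbit_congr j0 xp σ τ n h

lemma iterW_shift (M : MarkovSystem K N E) (σ : CodeSpace E) :
    ∀ (n : ℕ) (y : K),
      M.iterW (shiftMap E σ) (n + 1) y = M.wext (σ 1) (M.iterW σ n y) := by
  intro n
  induction n with
  | zero =>
    intro y
    show M.iterW (shiftMap E σ) 0 (M.wext (shiftMap E σ (-(0+1:ℤ))) y) = _
    simp [iterW, shiftMap]
  | succ n ih =>
    intro y
    have h1 : M.iterW (shiftMap E σ) (n + 1 + 1) y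
        = M.iterW (shiftMap E σ) (n + 1)
            (M.wext (shiftMap E σ (-(((n + 1 : ℕ) : ℤ) + 1))) y) := rfl
    have h2 : M.iterW σ (n + 1) y = M.iterW σ n (M.wext (σ (-((n : ℤ) + 1))) y) := rfl
    have hc : shiftMap E σ (-(((n + 1 : ℕ) : ℤ) + 1)) = σ (-((n : ℤ) + 1)) := by
      simp only [shiftMap]
      congr 1
    rw [h1, hc, ih, h2]

lemma orbit_shift (M : MarkovSystem K N E) (j0 : N) (xp : N → K) (σ : CodeSpace E) (n : ℕ) :
    M.orbit j0 xp (shiftMap E σ) (n + 1) = M.wext (σ 1) (M.orbit j0 xp σ n) := by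
  unfold orbit
  rw [iterW_shift]
  have hc : shiftMap E σ (-((n + 1 : ℕ) : ℤ)) = σ (-(n : ℤ)) := by
    simp only [shiftMap]
    congr 1
    push_cast
    ring
  rw [hc]

lemma iterW_mem (M : MarkovSystem K N E) (σ : CodeSpace E) (hσ : σ ∈ M.pathSpace) :
    ∀ (n : ℕ) (y : K) (e : E), σ (-(n : ℤ)) = some e → y ∈ M.Kset (M.i e) →
      ∃ e0 : E, σ 0 = some e0 ∧ M.iterW σ n y ∈ M.Kset (M.t e0) := by
  intro n
  induction n with
  | zero =>
    intro y e he hy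
    refine ⟨e, by simpa using he, ?_⟩
    simp only [iterW]
    have : σ 0 = some e := by simpa using he
    rw [this]
    exact M.w_mapsTo e hy
  | succ n ih =>
    intro y e he hy
    push_cast at he
    obtain ⟨a, a', ha, ha', hia⟩ := hσ (-(n + 1 : ℤ))
    rw [ha] at he
    obtain rfl : a = e := Option.some_inj.mp he
    have hnext : σ (-(n : ℤ)) = some a' := by
      rw [show (-(n + 1 : ℤ) + 1) = -(n : ℤ) by ring] at ha'
      exact ha'
    have hw : M.wext (σ (-(n + 1 : ℤ))) y ∈ M.Kset (M.i a') := by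
      rw [show σ (-(n+1:ℤ)) = some a from ha]
      rw [hia]
      exact M.w_mapsTo a hy
    obtain ⟨e0, he0, hmem⟩ := ih (M.wext (σ (-(n + 1 : ℤ))) y) a' hnext hw
    refine ⟨e0, he0, ?_⟩
    show M.iterW σ (n + 1) y ∈ _
    rw [show M.iterW σ (n + 1) y = M.iterW σ n (M.wext (σ (-(n + 1 : ℤ))) y) from rfl]
    exact hmem

lemma orbit_mem (M : MarkovSystem K N E) (j0 : N) (xp : N → K) (hxp : ∀ j, xp j ∈ M.Kset j)
    (σ : CodeSpace E) (hσ : σ ∈ M.pathSpace) (n : ℕ) :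
    ∃ e0 : E, σ 0 = some e0 ∧ M.orbit j0 xp σ n ∈ M.Kset (M.t e0) := by
  obtain ⟨e, e', he, -, -⟩ := hσ (-(n : ℤ))
  have : xp (M.iext j0 (σ (-(n : ℤ)))) ∈ M.Kset (M.i e) := by
    rw [he]; exact hxp _
  exact M.iterW_mem σ hσ n _ e he this

end MarkovSystem

end Orbit
section CodeMeas

variable {K : Type*} [MetricSpace K] [CompleteSpace K] [MeasurableSpace K] [BorelSpace K]
  {N E : Type*} [Countable E]

namespace MarkovSystem

/-- The set where the orbit converges. -/
def convSet (M : MarkovSystem K N E) (j0 : N) (xp : N → K) : Set (CodeSpace E) :=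
  {σ | ∃ l : K, Tendsto (fun n : ℕ => M.orbit j0 xp σ n) atTop (𝓝 l)}

lemma measurableSet_past_convSet (M : MarkovSystem K N E) (j0 : N) (xp : N → K) :
    MeasurableSet[pastAlgebra E] (M.convSet j0 xp) := by
  have hdist : ∀ m n : ℕ, Measurable[pastAlgebra E]
      (fun σ => dist (M.orbit j0 xp σ m) (M.orbit j0 xp σ n)) := by
    intro m n
    refine measurable_past_of_depends (max m n) _ fun σ τ h => ?_
    rw [M.orbit_congr j0 xp σ τ m fun k h1 h2 => h k (by push_cast at h1 ⊢; omega) h2,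
      M.orbit_congr j0 xp σ τ n fun k h1 h2 => h k (by push_cast at h1 ⊢; omega) h2]
  have hset : M.convSet j0 xp =
      ⋂ i : ℕ, ⋃ N0 : ℕ, ⋂ m : ℕ, ⋂ n : ℕ, ⋂ (_ : N0 ≤ m), ⋂ (_ : N0 ≤ n),
        {σ : CodeSpace E |
          dist (M.orbit j0 xp σ m) (M.orbit j0 xp σ n) < 1 / ((i : ℝ) + 1)} := by
    ext σ
    simp only [convSet, Set.mem_setOf_eq, Set.mem_iInter, Set.mem_iUnion]
    constructor
    · intro ⟨l, hl⟩ i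
      have hc : CauchySeq (fun n : ℕ => M.orbit j0 xp σ n) := hl.cauchySeq
      obtain ⟨N0, hN0⟩ := Metric.cauchySeq_iff.mp hc (1 / ((i : ℝ) + 1)) (by positivity)
      exact ⟨N0, fun m n hm hn => hN0 m hm n hn⟩
    · intro h
      apply cauchySeq_tendsto_of_complete
      rw [Metric.cauchySeq_iff]
      intro ε hε
      obtain ⟨i, hi⟩ := exists_nat_one_div_lt hε
      obtain ⟨N0, hN0⟩ := h i
      exact ⟨N0, fun m hm n hn => lt_trans (hN0 m n hm hn) hi⟩
  rw [hset]
  exact MeasurableSet.iInter fun i => MeasurableSet.iUnion fun N0 =>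
    MeasurableSet.iInter fun m => MeasurableSet.iInter fun n =>
      MeasurableSet.iInter fun _ => MeasurableSet.iInter fun _ =>
        (hdist m n) measurableSet_Iio

/-- A globally defined `pastAlgebra`-measurable version of the coding map. -/
noncomputable def codeM (M : MarkovSystem K N E) (j0 : N) (xp : N → K) : CodeSpace E → K := fun σ =>
  if h : σ ∈ M.convSet j0 xp then h.choose else xp (M.text j0 (σ 0))

lemma tendsto_codeM (M : MarkovSystem K N E) (j0 : N) (xp : N → K) (σ : CodeSpace E)
    (h : σ ∈ M.convSet j0 xp) :
    Tendsto (fun n : ℕ => M.orbit j0 xp σ n) atTop (𝓝 (M.codeM j0 xp σ)) := by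
  rw [codeM, dif_pos h]
  exact h.choose_spec

lemma measurable_past_codeM (M : MarkovSystem K N E) (j0 : N) (xp : N → K) :
    Measurable[pastAlgebra E] (M.codeM j0 xp) := by
  classical
  set C := M.convSet j0 xp with hC
  set f : ℕ → CodeSpace E → K := fun n σ =>
    if σ ∈ C then M.orbit j0 xp σ n else xp (M.text j0 (σ 0)) with hf
  have hfm : ∀ n, Measurable[pastAlgebra E] (f n) := by
    intro n
    letI : MeasurableSpace (CodeSpace E) := pastAlgebra E
    exact Measurable.ite (M.measurableSet_past_convSet j0 xp)
      (M.measurable_past_orbit j0 xp n)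
      (measurable_past_of_depends 0 _ fun σ τ h => by rw [h 0 (by omega) (by omega)])
  have hlim : Tendsto f atTop (𝓝 (M.codeM j0 xp)) := by
    rw [tendsto_pi_nhds]
    intro σ
    by_cases h : σ ∈ C
    · have := M.tendsto_codeM j0 xp σ h
      refine this.congr fun n => ?_
      simp only [f, if_pos h]
    · have hval : M.codeM j0 xp σ = xp (M.text j0 (σ 0)) := by
        rw [codeM, dif_neg h]
      rw [hval]
      refine tendsto_const_nhds.congr fun n => ?_
      simp only [f, if_neg h]
  letI : MeasurableSpace (CodeSpace E) := pastAlgebra E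
  exact measurable_of_tendsto_metrizable' atTop hfm hlim

lemma code_eq_codeM_of_mem (M : MarkovSystem K N E) (j0 : N) (xp : N → K) (σ : CodeSpace E)
    (h : σ ∈ M.codeDomain j0 xp) : M.code j0 xp σ = M.codeM j0 xp σ := by
  have hc : σ ∈ M.convSet j0 xp := h.2
  have h1 : Tendsto (fun n : ℕ => M.orbit j0 xp σ n) atTop (𝓝 (M.code j0 xp σ)) := by
    rw [code, dif_pos h]
    exact h.2.choose_spec
  exact tendsto_nhds_unique h1 (M.tendsto_codeM j0 xp σ hc)

lemma tendsto_code (M : MarkovSystem K N E) (j0 : N) (xp : N → K) (σ : CodeSpace E)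
    (h : σ ∈ M.codeDomain j0 xp) :
    Tendsto (fun n : ℕ => M.orbit j0 xp σ n) atTop (𝓝 (M.code j0 xp σ)) := by
  rw [code, dif_pos h]
  exact h.2.choose_spec

end MarkovSystem

end CodeMeas
section Dynamics

variable {K : Type*} [MetricSpace K] [CompleteSpace K] [MeasurableSpace K] [BorelSpace K]
  {N E : Type*} [Countable E]

namespace MarkovSystem

lemma shift_mem_pathSpace (M : MarkovSystem K N E) {σ : CodeSpace E}
    (h : σ ∈ M.pathSpace) : shiftMap E σ ∈ M.pathSpace := by
  intro n
  obtain ⟨e, e', he, he', hie⟩ := h (n + 1)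
  refine ⟨e, e', he, ?_, hie⟩
  exact he'

lemma orbit_mem_i (M : MarkovSystem K N E) (j0 : N) (xp : N → K) (hxp : ∀ j, xp j ∈ M.Kset j)
    {σ : CodeSpace E} (hσ : σ ∈ M.pathSpace) {e : E} (he : σ 1 = some e) (n : ℕ) :
    M.orbit j0 xp σ n ∈ M.Kset (M.i e) := by
  obtain ⟨e0, he0, hmem⟩ := M.orbit_mem j0 xp hxp σ hσ n
  obtain ⟨a, a', ha, ha', hia⟩ := hσ 0
  rw [he0] at ha
  obtain rfl : e0 = a := Option.some_inj.mp ha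
  have : σ (0 + 1) = some a' := ha'
  rw [show (0 + 1 : ℤ) = 1 by ring, he] at this
  obtain rfl : a' = e := Option.some_inj.mp this.symm
  rwa [hia]

lemma code_shift (M : MarkovSystem K N E) (j0 : N) (xp : N → K) (hxp : ∀ j, xp j ∈ M.Kset j)
    (hw : ∀ e : E, UniformContinuousOn (M.w e) (M.Kset (M.i e)))
    {σ : CodeSpace E} (hσ : σ ∈ M.codeDomain j0 xp) {e : E} (he : σ 1 = some e)
    (hF : M.code j0 xp σ ∈ M.Kset (M.i e)) :
    shiftMap E σ ∈ M.codeDomain j0 xp ∧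
      M.code j0 xp (shiftMap E σ) = M.w e (M.code j0 xp σ) := by
  have hpath : σ ∈ M.pathSpace := hσ.1
  have horb : Tendsto (fun n : ℕ => M.orbit j0 xp σ n) atTop (𝓝 (M.code j0 xp σ)) :=
    M.tendsto_code j0 xp σ hσ
  have horbmem : ∀ n, M.orbit j0 xp σ n ∈ M.Kset (M.i e) :=
    M.orbit_mem_i j0 xp hxp hpath he
  have hwithin : Tendsto (fun n : ℕ => M.orbit j0 xp σ n) atTop
      (𝓝[M.Kset (M.i e)] (M.code j0 xp σ)) :=
    tendsto_nhdsWithin_iff.mpr ⟨horb, Filter.Eventually.of_forall horbmem⟩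
  have hcont : ContinuousWithinAt (M.w e) (M.Kset (M.i e)) (M.code j0 xp σ) :=
    (hw e).continuousOn.continuousWithinAt hF
  have htend : Tendsto (fun n : ℕ => M.w e (M.orbit j0 xp σ n)) atTop
      (𝓝 (M.w e (M.code j0 xp σ))) := Filter.Tendsto.comp hcont hwithin
  have hshift : ∀ n : ℕ, M.orbit j0 xp (shiftMap E σ) (n + 1) = M.w e (M.orbit j0 xp σ n) := by
    intro n
    rw [M.orbit_shift j0 xp σ n, he]
    rfl
  have htend2 : Tendsto (fun n : ℕ => M.orbit j0 xp (shiftMap E σ) (n + 1)) atTop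
      (𝓝 (M.w e (M.code j0 xp σ))) := htend.congr fun n => (hshift n).symm
  have htend3 : Tendsto (fun n : ℕ => M.orbit j0 xp (shiftMap E σ) n) atTop
      (𝓝 (M.w e (M.code j0 xp σ))) := (tendsto_add_atTop_iff_nat 1).mp htend2
  have hmem : shiftMap E σ ∈ M.codeDomain j0 xp :=
    ⟨M.shift_mem_pathSpace hpath, ⟨_, htend3⟩⟩
  exact ⟨hmem, tendsto_nhds_unique (M.tendsto_code j0 xp _ hmem) htend3⟩

end MarkovSystem

end Dynamics
section Main

variable {K : Type*} [MetricSpace K] [CompleteSpace K] [MeasurableSpace K] [BorelSpace K]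
  {N E : Type*} [Countable N] [Countable E]

lemma measurable_shiftMap : Measurable (shiftMap E) :=
  measurable_pi_lambda _ fun k => measurable_pi_apply (k + 1)

lemma measurableSet_evt (e : E) : MeasurableSet {σ : CodeSpace E | σ 1 = some e} := by
  have h : {σ : CodeSpace E | σ 1 = some e}
      = (fun σ : CodeSpace E => σ 1) ⁻¹' {some e} := rfl
  rw [h]
  exact (measurable_pi_apply 1) (measurableSet_singleton (some e))

namespace MarkovSystem

lemma measurableSet_pathSpace (M : MarkovSystem K N E) : MeasurableSet M.pathSpace := by
  have h : M.pathSpace = ⋂ n : ℤ, ⋃ (e : E) (e' : E) (_ : M.i e' = M.t e),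
      ((fun σ : CodeSpace E => σ n) ⁻¹' {some e} ∩
        (fun σ : CodeSpace E => σ (n + 1)) ⁻¹' {some e'}) := by
    ext σ
    simp only [pathSpace, Set.mem_setOf_eq, Set.mem_iInter, Set.mem_iUnion, Set.mem_inter_iff,
      Set.mem_preimage, Set.mem_singleton_iff]
    constructor
    · intro h n; obtain ⟨e, e', h1, h2, h3⟩ := h n; exact ⟨e, e', h3, h1, h2⟩
    · intro h n; obtain ⟨e, e', h3, h1, h2⟩ := h n; exact ⟨e, e', h1, h2, h3⟩
  rw [h]
  refine MeasurableSet.iInter fun n => MeasurableSet.iUnion fun e => MeasurableSet.iUnion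
    fun e' => MeasurableSet.iUnion fun _ => MeasurableSet.inter ?_ ?_
  · exact (measurable_pi_apply n) (measurableSet_singleton _)
  · exact (measurable_pi_apply (n + 1)) (measurableSet_singleton _)

lemma measurableSet_codeDomain (M : MarkovSystem K N E) (j0 : N) (xp : N → K) :
    MeasurableSet (M.codeDomain j0 xp) := by
  have h : M.codeDomain j0 xp = M.pathSpace ∩ M.convSet j0 xp := rfl
  rw [h]
  exact M.measurableSet_pathSpace.inter (pastAlgebra_le _ (M.measurableSet_past_convSet j0 xp))

lemma measurable_codeM' (M : MarkovSystem K N E) (j0 : N) (xp : N → K) :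
    Measurable (M.codeM j0 xp) :=
  (M.measurable_past_codeM j0 xp).mono pastAlgebra_le le_rfl

/-- The key conditional-expectation identity. -/
lemma key_setIntegral (M : MarkovSystem K N E) (j0 : N) (xp : N → K)
    (Λ : Measure (CodeSpace E)) (hΛ : M.IsEquilibrium j0 xp Λ)
    {A : Set (CodeSpace E)} (hA : MeasurableSet[pastAlgebra E] A) (e : E) :
    ∫ σ in A, M.p e (M.code j0 xp σ) ∂Λ = (Λ (A ∩ {σ | σ 1 = some e})).toReal := by
  obtain ⟨hprob, hinv, hD, hcond⟩ := hΛ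
  haveI := hprob
  have hm : pastAlgebra E ≤ (inferInstance : MeasurableSpace (CodeSpace E)) := pastAlgebra_le
  have hSmeas : MeasurableSet {σ : CodeSpace E | σ 1 = some e} := measurableSet_evt e
  have hint : Integrable (Set.indicator {σ : CodeSpace E | σ 1 = some e} fun _ => (1 : ℝ)) Λ :=
    (integrable_const (1 : ℝ)).indicator hSmeas
  have hAmeas : MeasurableSet A := hm A hA
  calc ∫ σ in A, M.p e (M.code j0 xp σ) ∂Λ
      = ∫ σ in A,
          (Λ[Set.indicator {σ : CodeSpace E | σ 1 = some e} fun _ => (1 : ℝ)|pastAlgebra E]) σ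
            ∂Λ :=
        setIntegral_congr_ae hAmeas ((hcond e).mono fun σ h _ => h.symm)
    _ = ∫ σ in A, Set.indicator {σ : CodeSpace E | σ 1 = some e} (fun _ => (1 : ℝ)) σ ∂Λ :=
        setIntegral_condExp hm hint hA
    _ = ((Λ.restrict A) {σ : CodeSpace E | σ 1 = some e}).toReal := integral_indicator_one hSmeas
    _ = (Λ (A ∩ {σ | σ 1 = some e})).toReal := by
        rw [Measure.restrict_apply hSmeas, Set.inter_comm]

lemma key_setLIntegral (M : MarkovSystem K N E) (j0 : N) (xp : N → K)
    (Λ : Measure (CodeSpace E)) (hΛ : M.IsEquilibrium j0 xp Λ)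
    (hcode : AEMeasurable (M.code j0 xp) Λ)
    {A : Set (CodeSpace E)} (hA : MeasurableSet[pastAlgebra E] A) (e : E) :
    ∫⁻ σ in A, ENNReal.ofReal (M.p e (M.code j0 xp σ)) ∂Λ
      = Λ (A ∩ {σ | σ 1 = some e}) := by
  haveI := hΛ.1
  have hInt : Integrable (fun σ => M.p e (M.code j0 xp σ)) (Λ.restrict A) := by
    refine Integrable.mono' (integrable_const (1 : ℝ))
      ((M.p_measurable e).comp_aemeasurable hcode.restrict).aestronglyMeasurable
      (Filter.Eventually.of_forall fun σ => ?_)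
    rw [Real.norm_eq_abs, abs_le]
    exact ⟨by linarith [M.p_nonneg e (M.code j0 xp σ)], M.p_le_one e _⟩
  rw [← ofReal_integral_eq_lintegral_ofReal hInt
      (Filter.Eventually.of_forall fun σ => M.p_nonneg e _),
    M.key_setIntegral j0 xp Λ hΛ hA e, ENNReal.ofReal_toReal (measure_ne_top _ _)]

end MarkovSystem

end Main
/-- If each `w_e|_{K_{i(e)}}` is uniformly continuous, then `F(M) ∈ P(M)`
for every equilibrium state `M ∈ E(M)`. -/
theorem pushforward_equilibrium_isInvariant
    (M : MarkovSystem K N E) (j0 : N) (xp : N → K) (hxp : ∀ j, xp j ∈ M.Kset j)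
    (hw : ∀ e : E, UniformContinuousOn (M.w e) (M.Kset (M.i e)))
    (Λ : Measure (CodeSpace E)) (hΛ : M.IsEquilibrium j0 xp Λ) :
    M.IsInvariantMeasure (Measure.map (M.code j0 xp) Λ) := by
  classical
  have hEquil := hΛ
  obtain ⟨hprob, hinv, hD, hcond⟩ := hΛ
  haveI := hprob
  set F : CodeSpace E → K := M.code j0 xp with hF
  set F' : CodeSpace E → K := M.codeM j0 xp with hF'
  have hF'meas : Measurable F' := M.measurable_codeM' j0 xp
  have hDmeas := M.measurableSet_codeDomain j0 xp
  have hDae : ∀ᵐ σ ∂Λ, σ ∈ M.codeDomain j0 xp := by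
    rw [ae_iff]
    have h0 : Λ (M.codeDomain j0 xp)ᶜ = 0 := by
      simp [measure_compl hDmeas (measure_ne_top _ _), hD]
    exact h0
  have hFF' : F =ᵐ[Λ] F' := hDae.mono fun σ h => M.code_eq_codeM_of_mem j0 xp σ h
  have hFaem : AEMeasurable F Λ := hF'meas.aemeasurable.congr hFF'.symm
  constructor
  · exact Measure.isProbabilityMeasure_map hFaem
  · refine Measure.ext fun B hB => ?_
    set S : E → Set (CodeSpace E) := fun e => {σ | σ 1 = some e} with hSdef
    set A : E → Set (CodeSpace E) := fun e => F' ⁻¹' ((M.w e) ⁻¹' B) with hAdef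
    have hApast : ∀ e, MeasurableSet[pastAlgebra E] (A e) := fun e =>
      (M.measurable_past_codeM j0 xp) ((M.w_measurable e) hB)
    have hAmeas : ∀ e, MeasurableSet (A e) := fun e => hF'meas ((M.w_measurable e) hB)
    -- per-edge identity
    have he1 : ∀ e : E,
        (Measure.map (M.w e) ((Measure.map F Λ).withDensity
            fun x => ENNReal.ofReal (M.p e x))) B = Λ (A e ∩ S e) := by
      intro e
      rw [Measure.map_apply (M.w_measurable e) hB,
        withDensity_apply _ ((M.w_measurable e) hB),
        ← lintegral_indicator ((M.w_measurable e) hB)]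
      have step1 : ∫⁻ x, Set.indicator ((M.w e) ⁻¹' B)
            (fun x => ENNReal.ofReal (M.p e x)) x ∂(Measure.map F Λ)
          = ∫⁻ σ, Set.indicator ((M.w e) ⁻¹' B)
            (fun x => ENNReal.ofReal (M.p e x)) (F σ) ∂Λ :=
        lintegral_map'
          (((M.p_measurable e).ennreal_ofReal.indicator ((M.w_measurable e) hB)).aemeasurable)
          hFaem
      have step2 : (∫⁻ σ, Set.indicator ((M.w e) ⁻¹' B)
            (fun x => ENNReal.ofReal (M.p e x)) (F σ) ∂Λ)
          = ∫⁻ σ, Set.indicator (A e) (fun σ => ENNReal.ofReal (M.p e (F σ))) σ ∂Λ := by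
        apply lintegral_congr_ae
        filter_upwards [hFF'] with σ hσ
        by_cases hmem2 : F' σ ∈ (M.w e) ⁻¹' B
        · have h1 : (A e).indicator (fun σ => ENNReal.ofReal (M.p e (F σ))) σ
              = ENNReal.ofReal (M.p e (F σ)) := Set.indicator_of_mem (by exact hmem2) _
          rw [hσ, Set.indicator_of_mem hmem2, h1, hσ]
        · have h1 : (A e).indicator (fun σ => ENNReal.ofReal (M.p e (F σ))) σ = 0 :=
            Set.indicator_of_notMem (by exact hmem2) _
          rw [hσ, Set.indicator_of_notMem hmem2, h1]
      rw [step1, step2, lintegral_indicator (hAmeas e),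
        M.key_setLIntegral j0 xp Λ hEquil hFaem (hApast e) e]
    have hsum : (M.adjOp (Measure.map F Λ)) B = ∑' e : E, Λ (A e ∩ S e) := by
      rw [MarkovSystem.adjOp, Measure.sum_apply _ hB]
      exact tsum_congr he1
    have hdisj : Pairwise (Function.onFun Disjoint fun e => A e ∩ S e) := by
      intro e e' hne
      refine Set.disjoint_left.mpr ?_
      rintro σ ⟨-, h1⟩ ⟨-, h2⟩
      exact hne (Option.some_inj.mp ((h1 : σ 1 = some e).symm.trans (h2 : σ 1 = some e')))
    have hiUnion : Λ (⋃ e, A e ∩ S e) = ∑' e, Λ (A e ∩ S e) :=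
      measure_iUnion hdisj fun e => (hAmeas e).inter (measurableSet_evt e)
    -- a.e. facts
    have h3 : ∀ e : E, ∀ᵐ σ ∂Λ, σ 1 = some e → F σ ∈ M.Kset (M.i e) := by
      intro e
      set A0 : Set (CodeSpace E) := F' ⁻¹' (M.Kset (M.i e))ᶜ with hA0
      have hA0past : MeasurableSet[pastAlgebra E] A0 :=
        (M.measurable_past_codeM j0 xp) (M.Kset_measurable (M.i e)).compl
      have hzero : Λ (A0 ∩ S e) = 0 := by
        rw [← M.key_setLIntegral j0 xp Λ hEquil hFaem hA0past e]
        have hz : ∀ᵐ σ ∂(Λ.restrict A0), ENNReal.ofReal (M.p e (F σ)) = 0 := by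
          filter_upwards [ae_restrict_of_ae hFF', ae_restrict_mem (pastAlgebra_le _ hA0past)]
            with σ hσ hmem
          rw [hσ, M.p_zero_outside e _ (hmem : F' σ ∈ (M.Kset (M.i e))ᶜ)]
          simp
        rw [lintegral_congr_ae hz, lintegral_zero]
      have hnm := measure_eq_zero_iff_ae_notMem.mp hzero
      filter_upwards [hnm, hFF'] with σ hσ hff he1'
      by_contra hc
      exact hσ ⟨show F' σ ∈ (M.Kset (M.i e))ᶜ from by rw [← hff]; exact hc, he1'⟩
    have hae_all : ∀ᵐ σ ∂Λ, ∀ e : E, σ 1 = some e → F σ ∈ M.Kset (M.i e) :=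
      ae_all_iff.mpr h3
    have h4 : ∀ᵐ σ ∂Λ, F (shiftMap E σ) = F' (shiftMap E σ) := by
      obtain ⟨Nn, hNsub, hNmeas, hNnull⟩ := exists_measurable_superset_of_null (ae_iff.mp hFF')
      have hpre : Λ ((shiftMap E) ⁻¹' Nn) = 0 := by
        rw [← Measure.map_apply measurable_shiftMap hNmeas, hinv, hNnull]
      rw [ae_iff]
      refine measure_mono_null ?_ hpre
      intro σ hσ
      exact hNsub (hσ : ¬ F (shiftMap E σ) = F' (shiftMap E σ))
    -- identify the union with the shifted preimage, a.e.
    have hWT : Λ (⋃ e, A e ∩ S e) = Λ ((shiftMap E) ⁻¹' (F' ⁻¹' B)) := by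
      apply measure_congr
      filter_upwards [hDae, hFF', hae_all, h4] with σ hd hff hmem hsh
      apply eq_iff_iff.mpr
      obtain ⟨a, e0, ha, ha', hia⟩ := hd.1 0
      have he0 : σ 1 = some e0 := by
        have h01 : σ (0 + 1) = some e0 := ha'
        norm_num at h01
        exact h01
      have hFK : F σ ∈ M.Kset (M.i e0) := hmem e0 he0
      obtain ⟨hmemD, hcodes⟩ := M.code_shift j0 xp hxp hw hd he0 hFK
      rw [← hF] at hcodes
      have hiff : (M.w e0 (F σ) ∈ B) ↔ F' (shiftMap E σ) ∈ B := by
        rw [← hsh, hcodes]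
      constructor
      · intro hin
        obtain ⟨e, he⟩ := Set.mem_iUnion.mp hin
        obtain ⟨hae, hse⟩ := he
        have heq : e = e0 := Option.some_inj.mp ((hse : σ 1 = some e).symm.trans he0)
        subst heq
        have hw' : M.w e (F' σ) ∈ B := hae
        show F' (shiftMap E σ) ∈ B
        refine hiff.mp ?_
        rw [hff]
        exact hw'
      · intro hin
        have hb : F' (shiftMap E σ) ∈ B := hin
        refine Set.mem_iUnion.mpr ⟨e0, ⟨?_, he0⟩⟩
        have hwb : M.w e0 (F σ) ∈ B := hiff.mpr hb
        show M.w e0 (F' σ) ∈ B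
        rw [← hff]
        exact hwb
    have hT : Λ ((shiftMap E) ⁻¹' (F' ⁻¹' B)) = Λ (F' ⁻¹' B) := by
      rw [← Measure.map_apply measurable_shiftMap (hF'meas hB), hinv]
    have hmuB : (Measure.map F Λ) B = Λ (F' ⁻¹' B) := by
      rw [Measure.map_apply_of_aemeasurable hFaem hB]
      apply measure_congr
      filter_upwards [hFF'] with σ h
      apply eq_iff_iff.mpr
      constructor <;> intro hx
      · show F' σ ∈ B; rwa [← h]
      · show F σ ∈ B; rwa [h]
    rw [hsum, ← hiUnion, hWT, hT]
    exact hmuB.symm
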